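/- (Stability of pointed rays.) Suppose f : X → Y is a (λ₁,μ₁)-large scale Lipschitz and (λ₂,μ₂)-radial function between δ-hyperbolic geodesic spaces. Then for every x₀ ∈ X there exists a constant H = H(λ₁,μ₁,λ₂,μ₂,δ,x₀) such that: if γ : [0,l] → X is a geodesic with γ(0) = x₀ and γ' is any geodesic in Y from f(x₀) to f(γ(l)), then the Hausdorff distance between f(Im γ) and Im γ' is at most H. -/
import Mathlib


open Filter Metric Set

noncomputable section

namespace Gromov

variable {X : Type*} [MetricSpace X] {Y : Type*} [MetricSpace Y]

/-- The Gromov product `(x,y)_a = (d(x,a)+d(y,a)-d(x,y))/2`. -/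
def gp (a x y : X) : ℝ := (dist x a + dist y a - dist x y) / 2

/-- Gromov `δ`-hyperbolicity via the `δ/4`-inequality. -/
def IsDeltaHyperbolic (X : Type*) [MetricSpace X] (δ : ℝ) : Prop :=
  ∀ x y z w : X, gp w x y ≥ min (gp w x z) (gp w z y) - δ / 4

/-- `γ` is a geodesic starting at `x`, parametrized by arclength on `[0, M]`. -/
def IsGeodesicOn (γ : ℝ → X) (x : X) (M : ℝ) : Prop :=
  γ 0 = x ∧ ∀ s ∈ Icc (0:ℝ) M, ∀ t ∈ Icc (0:ℝ) M, dist (γ s) (γ t) = |s - t|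

/-- Every two points are joined by a geodesic. -/
def IsGeodesicSpace (X : Type*) [MetricSpace X] : Prop :=
  ∀ x y : X, ∃ γ : ℝ → X, IsGeodesicOn γ x (dist x y) ∧ γ (dist x y) = y

/-- An infinite geodesic ray emanating from `x`. -/
def IsRay (γ : ℝ → X) (x : X) : Prop :=
  γ 0 = x ∧ ∀ s ∈ Ici (0:ℝ), ∀ t ∈ Ici (0:ℝ), dist (γ s) (γ t) = |s - t|

/-- `f` is `(l, μ)`-large scale Lipschitz. -/
def IsLSL (f : X → Y) (l μ : ℝ) : Prop :=
  ∀ x y : X, dist (f x) (f y) ≤ l * dist x y + μ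

/-- `f` is large scale Lipschitz. -/
def LSL (f : X → Y) : Prop := ∃ l μ : ℝ, 0 < l ∧ 0 < μ ∧ IsLSL f l μ

/-- The `(l2, μ2)`-radial lower bound condition with respect to `x₀`:
on every finite geodesic emanating from `x₀`, `l2·d(x,y) - μ2 ≤ d(f(x),f(y))`. -/
def IsRadialWith (f : X → Y) (x₀ : X) (l2 μ2 : ℝ) : Prop :=
  ∀ M, 0 ≤ M → ∀ γ : ℝ → X, IsGeodesicOn γ x₀ M →
    ∀ s ∈ Icc (0:ℝ) M, ∀ t ∈ Icc (0:ℝ) M,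
      l2 * dist (γ s) (γ t) - μ2 ≤ dist (f (γ s)) (f (γ t))

/-- `f` is a radial function with respect to `x₀`. -/
def Radial (f : X → Y) (x₀ : X) : Prop :=
  LSL f ∧ ∃ l2 μ2 : ℝ, 0 < l2 ∧ 0 < μ2 ∧ IsRadialWith f x₀ l2 μ2

/-- `f` is visual: for some basepoint `a`, `(x_n,y_n)_a → ∞` implies
`(f(x_n),f(y_n))_{f(a)} → ∞`. -/
def VisualFn (f : X → Y) : Prop :=
  ∃ a : X, ∀ x y : ℕ → X,
    Tendsto (fun n => gp a (x n) (y n)) atTop atTop →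
    Tendsto (fun n => gp (f a) (f (x n)) (f (y n))) atTop atTop

/-- `liminf_{i,j→∞} (x_i,x_j)_a = ∞`: the sequence converges to infinity. -/
def ConvSeq (a : X) (x : ℕ → X) : Prop :=
  Tendsto (fun p : ℕ × ℕ => gp a (x p.1) (x p.2)) atTop atTop

/-- `liminf_{i,j→∞} (x_i,y_j)_a = ∞`: the two sequences are equivalent. -/
def SeqEquiv (a : X) (x y : ℕ → X) : Prop :=
  Tendsto (fun p : ℕ × ℕ => gp a (x p.1) (y p.2)) atTop atTop

def BSeq (a : X) : Type _ := {x : ℕ → X // ConvSeq a x}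

/-- The sequential boundary `∂X` with basepoint `a`. -/
def Boundary (a : X) : Type _ := Quot (fun x y : BSeq a => SeqEquiv a x.1 y.1)

/-- The boundary point represented by a sequence. -/
def bpt (a : X) (x : ℕ → X) (hx : ConvSeq a x) : Boundary a :=
  Quot.mk _ ⟨x, hx⟩

/-- `liminf_{i,j→∞} (x_i,y_j)_a` as an extended real. -/
def gpSeqs (a : X) (x y : ℕ → X) : EReal :=
  liminf (fun p : ℕ × ℕ => ((gp a (x p.1) (y p.2)) : EReal)) atTop

/-- The basic neighborhood `U(p,r)` in the sequential boundary. -/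
def U (a : X) (p : Boundary a) (r : ℝ) : Set (Boundary a) :=
  {q | ∃ (x y : ℕ → X) (hx : ConvSeq a x) (hy : ConvSeq a y),
    bpt a x hx = p ∧ bpt a y hy = q ∧ (r : EReal) ≤ gpSeqs a x y}

instance (a : X) : TopologicalSpace (Boundary a) :=
  TopologicalSpace.generateFrom {s | ∃ p r, 0 < r ∧ s = U a p r}

/-- The union `X ∪ ∂X`. -/
def Comp (a : X) : Type _ := X ⊕ Boundary a

def Comp.inl {a : X} (x : X) : Comp a := Sum.inl x
def Comp.inr {a : X} (p : Boundary a) : Comp a := Sum.inr p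

/-- The extension of `U(p,r)` to `X ∪ ∂X`. -/
def UFull (a : X) (p : Boundary a) (r : ℝ) : Set (Comp a) :=
  {z : X ⊕ Boundary a | Sum.elim
    (fun x : X => ∃ (s : ℕ → X) (hs : ConvSeq a s), bpt a s hs = p ∧
      (r : EReal) ≤ liminf (fun i : ℕ => ((gp a (s i) x) : EReal)) atTop)
    (fun q : Boundary a => q ∈ U a p r) z}

instance (a : X) : TopologicalSpace (Comp a) :=
  TopologicalSpace.generateFrom
    ({s | ∃ u : Set X, IsOpen u ∧ s = Comp.inl '' u} ∪
     {s | ∃ p r, 0 < r ∧ s = UFull a p r})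

/-- The Gromov product of two boundary points:
`(p,q)_a = inf liminf_{i→∞} (x_i,y_i)_a` over representatives. -/
def gpBoundary (a : X) (p q : Boundary a) : EReal :=
  sInf {e : EReal | ∃ (x y : ℕ → X) (hx : ConvSeq a x) (hy : ConvSeq a y),
    bpt a x hx = p ∧ bpt a y hy = q ∧
    e = liminf (fun i : ℕ => ((gp a (x i) (y i)) : EReal)) atTop}

/-- `K^{-e}` for an extended real exponent `e` (with `K^{-∞} = 0`). -/
def negPow (K : ℝ) (e : EReal) : ℝ :=
  if e = ⊤ then 0 else if e = ⊥ then 0 else Real.rpow K (-(e.toReal))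

/-- `d` is a visual metric on `∂X` with parameters `K, C > 1`. -/
def IsVisualMetric (a : X) (d : Boundary a → Boundary a → ℝ) (K C : ℝ) : Prop :=
  1 < K ∧ 1 < C ∧ ∀ p q : Boundary a,
    negPow K (gpBoundary a p q) / C ≤ d p q ∧ d p q ≤ C * negPow K (gpBoundary a p q)

/-- A map between sets with distinguished distance functions is Hölder. -/
def IsHolder {A B : Type*} (dA : A → A → ℝ) (dB : B → B → ℝ) (g : A → B) : Prop :=
  ∃ L α : ℝ, 0 < L ∧ 0 < α ∧ ∀ p q : A, dB (g p) (g q) ≤ L * Real.rpow (dA p q) α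

/-- `(ξ₁,ξ₂)_a = liminf_{t→∞} (ξ₁(t),ξ₂(t))_a` for rays. -/
def gpRays (a : X) (ξ₁ ξ₂ : ℝ → X) : EReal :=
  liminf (fun t : ℝ => ((gp a (ξ₁ t) (ξ₂ t)) : EReal)) atTop

/-- The geodesic ray `ξ` represents the boundary point `p`. -/
def RayRepresents (a : X) (ξ : ℝ → X) (p : Boundary a) : Prop :=
  ∃ h : ConvSeq a (fun n : ℕ => ξ n), bpt a (fun n : ℕ => ξ n) h = p

/-- `(x,ξ)_a = liminf_{n→∞} (x,ξ(n))_a`. -/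
def gpPointRay (a x : X) (ξ : ℝ → X) : ℝ :=
  liminf (fun n : ℕ => gp a x (ξ n)) atTop

/-- `X` is a visual hyperbolic space with basepoint `a` and constant `D`. -/
def IsVisualSpace (a : X) (D : ℝ) : Prop :=
  ∀ x : X, ∃ ξ : ℝ → X, IsRay ξ a ∧ gpPointRay a x ξ > dist x a - D

/-- A maximal finite geodesic from `a`: it admits no proper geodesic extension. -/
def MaximalGeodesic (ζ : ℝ → X) (a : X) (M : ℝ) : Prop :=
  IsGeodesicOn ζ a M ∧
    ¬ ∃ (M' : ℝ) (ζ' : ℝ → X), M < M' ∧ IsGeodesicOn ζ' a M' ∧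
      ∀ t ∈ Icc (0:ℝ) M, ζ' t = ζ t

/-- `f : X → Y` is a radial extension with parameter `A` of `g : ∂X → ∂Y`
(`D` being the visuality constant of `X`). -/
def IsRadialExtension (a : X) (b : Y) (g : Boundary a → Boundary b)
    (A D : ℝ) (f : X → Y) : Prop :=
  f a = b ∧
  ∀ x : X, x ≠ a →
    ((∃ (ξ : ℝ → X) (t : ℝ), IsRay ξ a ∧ 0 ≤ t ∧ ξ t = x) →
      ∃ (ξ : ℝ → X) (t : ℝ) (η : ℝ → Y), IsRay ξ a ∧ 0 ≤ t ∧ ξ t = x ∧ IsRay η b ∧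
        (∃ p : Boundary a, RayRepresents a ξ p ∧ RayRepresents b η (g p)) ∧
        f x = η (A * t)) ∧
    ((¬ ∃ (ξ : ℝ → X) (t : ℝ), IsRay ξ a ∧ 0 ≤ t ∧ ξ t = x) →
      ∃ (M t : ℝ) (ζ ξ : ℝ → X) (η : ℝ → Y),
        MaximalGeodesic ζ a M ∧ t ∈ Icc (0:ℝ) M ∧ ζ t = x ∧
        IsRay ξ a ∧ gpPointRay a (ζ M) ξ > dist (ζ M) a - D ∧ IsRay η b ∧
        (∃ p : Boundary a, RayRepresents a ξ p ∧ RayRepresents b η (g p)) ∧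
        f x = η (A * t))

/-- `f` is coarsely surjective. -/
def CoarselySurjective (f : X → Y) : Prop :=
  ∃ S : ℝ, 0 < S ∧ ∀ y : Y, ∃ x : X, dist y (f x) ≤ S

/-- `f` is bornologous (coarse). -/
def Bornologous (f : X → Y) : Prop :=
  ∀ R : ℝ, 0 < R → ∃ S : ℝ, 0 < S ∧ ∀ x x' : X, dist x x' ≤ R → dist (f x) (f x') ≤ S

/-- `f` is a coarse embedding. -/
def CoarseEmbedding (f : X → Y) : Prop :=
  Bornologous f ∧
    ∀ R : ℝ, 0 < R → ∃ S : ℝ, 0 < S ∧ ∀ x x' : X, dist (f x) (f x') ≤ R → dist x x' ≤ S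

/-- `f` is coarsely `n`-to-1. -/
def CoarselyNto1 (f : X → Y) (n : ℕ) : Prop :=
  ∀ R : ℝ, 0 < R → ∃ S : ℝ, 0 < S ∧ ∀ A : Set Y, EMetric.diam A < ENNReal.ofReal R →
    ∃ B : Fin n → Set X, (f ⁻¹' A = ⋃ i, B i) ∧
      ∀ i, EMetric.diam (B i) < ENNReal.ofReal S

/-- `g : ∂X → ∂Y` is the boundary map induced by `f`, i.e. `g [(x_n)] = [(f(x_n))]`. -/
def InducedBoundaryMap (a : X) (f : X → Y) (g : Boundary a → Boundary (f a)) : Prop :=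
  ∀ (x : ℕ → X) (hx : ConvSeq a x) (hfx : ConvSeq (f a) (f ∘ x)),
    g (bpt a x hx) = bpt (f a) (f ∘ x) hfx

/-- `g` is (at most) `n`-to-1. -/
def NTo1 {A B : Type*} (g : A → B) (n : ℕ) : Prop :=
  ∀ b : B, ∃ s : Finset A, s.card ≤ n ∧ ∀ a : A, g a = b → a ∈ s

/-- Covering dimension at most `n`: every open cover admits an open refinement
of multiplicity at most `n+1`. -/
def CovDimLE (Z : Type*) [TopologicalSpace Z] (n : ℕ) : Prop :=
  ∀ 𝒰 : Set (Set Z), (∀ u ∈ 𝒰, IsOpen u) → ⋃₀ 𝒰 = univ →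
    ∃ 𝒱 : Set (Set Z), (∀ v ∈ 𝒱, IsOpen v) ∧ ⋃₀ 𝒱 = univ ∧
      (∀ v ∈ 𝒱, ∃ u ∈ 𝒰, v ⊆ u) ∧
      ∀ z : Z, {v ∈ 𝒱 | z ∈ v}.Finite ∧ {v ∈ 𝒱 | z ∈ v}.ncard ≤ n + 1

/-- `c_{f,n}(r)`: the supremum of numbers `B` such that there exist `n+1` points
with mutual Gromov products `< r` whose images have mutual Gromov products `≥ B`. -/
def cfn (a : X) (b : Y) (f : X → Y) (n : ℕ) (r : ℝ) : EReal :=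
  sSup {e : EReal | ∃ (B : ℝ) (x : Fin (n + 1) → X), e = (B : EReal) ∧
    (∀ i j, i ≠ j → gp a (x i) (x j) < r) ∧
    (∀ i j, i ≠ j → B ≤ gp b (f (x i)) (f (x j)))}

section Helper
variable {Z : Type*} [MetricSpace Z]

lemma gp_nonneg (w x y : Z) : 0 ≤ gp w x y := by
  have h := dist_triangle x w y
  rw [dist_comm w y] at h
  unfold gp; linarith

lemma gp_le_left (w x y : Z) : gp w x y ≤ dist x w := by
  have h := dist_triangle y x w
  rw [dist_comm y x] at h
  unfold gp; linarith

lemma gp_self (w x : Z) : gp w x x = dist x w := by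
  unfold gp; simp

lemma gp_lower (w x y : Z) (r b : ℝ) (hx : r ≤ dist x w) (hy : r ≤ dist y w)
    (hxy : dist x y ≤ b) : r - b / 2 ≤ gp w x y := by
  unfold gp; linarith

lemma chainGP (δ₁ : ℝ)
    (hδ : ∀ x y z w : Z, min (gp w x z) (gp w z y) - δ₁ ≤ gp w x y)
    (w : Z) (z : ℕ → Z) (B : ℝ) (hB : ∀ i, B ≤ gp w (z i) (z (i+1))) :
    ∀ m a n : ℕ, n ≤ 2^m → B - δ₁ * m ≤ gp w (z a) (z (a+n)) := by
  intro m
  induction m with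
  | zero =>
    intro a n hn
    interval_cases n
    · have h1 := hB a
      have h2 := gp_le_left w (z a) (z (a+1))
      have h3 : gp w (z a) (z (a+0)) = dist (z a) w := by simp [gp_self]
      rw [h3]; push_cast; linarith
    · have := hB a; push_cast; linarith
  | succ m ih =>
    intro a n hn
    have hn' : n ≤ 2 * 2^m := by rw [pow_succ] at hn; omega
    have h1 : n / 2 ≤ 2^m := by omega
    have h2 : n - n / 2 ≤ 2^m := by omega
    have t1 := ih a (n/2) h1
    have t2 := ih (a + n/2) (n - n/2) h2
    have he : a + n/2 + (n - n/2) = a + n := by omega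
    rw [he] at t2
    have hmin : B - δ₁ * m ≤ min (gp w (z a) (z (a + n/2))) (gp w (z (a + n/2)) (z (a+n))) :=
      le_min t1 t2
    have := hδ (z a) (z (a+n)) (z (a + n/2)) w
    push_cast
    linarith

lemma pow_two_ge_sq (u : ℕ) : ((u:ℝ))^2 / 16 ≤ (2:ℝ)^u := by
  have hu : (0:ℝ) ≤ u := Nat.cast_nonneg u
  have hlog : (1:ℝ)/2 ≤ Real.log 2 := by
    have := Real.log_two_gt_d9; linarith
  have hx : (0:ℝ) ≤ (u:ℝ) * Real.log 2 := by positivity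
  have h2u : (2:ℝ)^u = Real.exp ((u:ℝ) * Real.log 2) := by
    rw [← Real.log_pow, Real.exp_log (by positivity)]
  set x := (u:ℝ) * Real.log 2 with hxdef
  have hexp : x^2 / 4 ≤ Real.exp x := by
    have h1 : Real.exp x = (Real.exp (x/2))^2 := by
      rw [sq, ← Real.exp_add]; ring_nf
    have h2 : x/2 ≤ Real.exp (x/2) := by
      have := Real.add_one_le_exp (x/2); linarith
    have h3 : (x/2)^2 ≤ (Real.exp (x/2))^2 := by
      apply pow_le_pow_left₀ (by linarith) h2
    rw [h1]; nlinarith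
  have hxu : (u:ℝ)/2 ≤ x := by
    rw [hxdef]
    calc (u:ℝ)/2 = (u:ℝ) * (1/2) := by ring
    _ ≤ (u:ℝ) * Real.log 2 := by
        apply mul_le_mul_of_nonneg_left hlog hu
  have : ((u:ℝ)/2)^2 ≤ x^2 := by apply pow_le_pow_left₀ (by linarith) hxu
  rw [h2u]
  nlinarith

set_option maxHeartbeats 2000000 in
/-- Core discrete Morse lemma: any geodesic joining the endpoints of a
quasi-geodesic chain stays within a uniform distance of the chain. -/
lemma geodesic_near_chain (δ₁ : ℝ) (hδ₁ : 1 ≤ δ₁)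
    (hY' : ∀ x y z w : Z, min (gp w x z) (gp w z y) - δ₁ ≤ gp w x y)
    (hgY : IsGeodesicSpace Z)
    (b cl c' : ℝ) (hb : 1 ≤ b) (hcl : 0 < cl) (hc' : 0 < c') :
    ∃ ρ₀ : ℝ, 0 < ρ₀ ∧ ∀ (N : ℕ) (y : ℕ → Z),
      (∀ i : ℕ, dist (y i) (y (i+1)) ≤ b) →
      (∀ i j : ℕ, i ≤ N → j ≤ N → cl * |(i:ℝ) - (j:ℝ)| - c' ≤ dist (y i) (y j)) →
      ∀ D : ℝ, 0 ≤ D → ∀ σ : ℝ → Z, σ 0 = y 0 →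
      (∀ s ∈ Icc (0:ℝ) D, ∀ t ∈ Icc (0:ℝ) D, dist (σ s) (σ t) = |s - t|) →
      σ D = y N →
      ∀ t ∈ Icc (0:ℝ) D, ∃ k, k ≤ N ∧ dist (σ t) (y k) ≤ ρ₀ := by
  set Aq := 2 + 6/cl with hAq
  set Bq := 4 + c'/cl with hBq
  set Pq := Aq * δ₁ with hPq
  set Qq := Aq * (δ₁ + 1 + b/2) + Bq with hQq
  set U₀ := max 1 (16*(Pq + Qq)) with hU₀
  set ρ₀ := δ₁ * (U₀ + 2) + 1 + b/2 with hρ₀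
  have hA0 : 0 < Aq := by rw [hAq]; positivity
  have hB0 : 0 < Bq := by rw [hBq]; positivity
  have hP0 : 0 < Pq := by rw [hPq]; positivity
  have hQ0 : 0 < Qq := by rw [hQq]; positivity
  have hU1 : (1:ℝ) ≤ U₀ := le_max_left _ _
  have hρ₀pos : 0 < ρ₀ := by
    have h1 : 0 ≤ δ₁ * (U₀ + 2) := mul_nonneg (by linarith) (by linarith)
    rw [hρ₀]; linarith
  refine ⟨ρ₀, hρ₀pos, ?_⟩
  intro N y hstepy hlow D hD σ hσ0 hσd hσN
  -- the min-distance function to the chain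
  have hne : (Finset.range (N+1)).Nonempty := ⟨0, by simp⟩
  set φ : ℝ → ℝ := fun t => (Finset.range (N+1)).inf' hne (fun k => dist (σ t) (y k)) with hφ
  have hφle : ∀ t : ℝ, ∀ k : ℕ, k ≤ N → φ t ≤ dist (σ t) (y k) := by
    intro t k hk
    exact Finset.inf'_le _ (Finset.mem_range.mpr (by omega))
  have hφwit : ∀ t : ℝ, ∃ k, k ≤ N ∧ φ t = dist (σ t) (y k) := by
    intro t
    obtain ⟨k, hk, hkeq⟩ := Finset.exists_mem_eq_inf' hne (fun k => dist (σ t) (y k))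
    have := Finset.mem_range.mp hk
    exact ⟨k, by omega, hkeq⟩
  have hφnn : ∀ t : ℝ, 0 ≤ φ t := by
    intro t
    obtain ⟨k, _, hkeq⟩ := hφwit t
    rw [hkeq]; exact dist_nonneg
  -- supremum of φ over the geodesic
  set S := φ '' (Icc 0 D) with hS
  have hSne : S.Nonempty := ⟨φ 0, 0, ⟨le_refl 0, hD⟩, rfl⟩
  have hSbdd : BddAbove S := by
    refine ⟨D, ?_⟩
    rintro r ⟨t, ht, rfl⟩
    have h1 : φ t ≤ dist (σ t) (y 0) := hφle t 0 (Nat.zero_le N)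
    rw [← hσ0] at h1
    rw [hσd t ht 0 ⟨le_refl 0, hD⟩] at h1
    rw [sub_zero, abs_of_nonneg ht.1] at h1
    exact h1.trans ht.2
  set ρ := sSup S with hρdef
  have hρ_ge : ∀ t ∈ Icc (0:ℝ) D, φ t ≤ ρ := fun t ht => le_csSup hSbdd ⟨t, ht, rfl⟩
  have hρ0 : 0 ≤ ρ := (hφnn 0).trans (hρ_ge 0 ⟨le_refl 0, hD⟩)
  -- it suffices to bound ρ
  suffices hfin : ρ ≤ ρ₀ by
    intro t ht
    obtain ⟨k, hk, hkeq⟩ := hφwit t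
    exact ⟨k, hk, by rw [← hkeq]; exact (hρ_ge t ht).trans hfin⟩
  -- near-maximizer
  obtain ⟨r, hrS, hr⟩ := exists_lt_of_lt_csSup hSne (show ρ - 1 < ρ by linarith)
  obtain ⟨t₀, ht₀, rfl⟩ := hrS
  have hfar : ∀ k : ℕ, k ≤ N → ρ - 1 < dist (σ t₀) (y k) :=
    fun k hk => lt_of_lt_of_le hr (hφle t₀ k hk)
  set w := σ t₀ with hw
  -- left anchor
  set ta := max (t₀ - 2*ρ) 0 with hta
  have htaI : ta ∈ Icc (0:ℝ) D := ⟨le_max_right _ _, max_le (by linarith [ht₀.2]) hD⟩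
  have htat₀ : ta ≤ t₀ := max_le (by linarith) ht₀.1
  set a' := σ ta with ha'
  have hdaw : dist a' w = t₀ - ta := by
    rw [ha', hw, hσd ta htaI t₀ ht₀, abs_of_nonpos (by linarith)]; ring
  obtain ⟨i₁, hi₁N, hi₁d, hi₁x⟩ :
      ∃ i₁, i₁ ≤ N ∧ dist a' (y i₁) ≤ ρ ∧ (2*ρ ≤ dist a' w ∨ dist a' (y i₁) = 0) := by
    by_cases hcl2 : 0 ≤ t₀ - 2*ρ
    · obtain ⟨k, hk, hkeq⟩ := hφwit ta
      refine ⟨k, hk, ?_, Or.inl ?_⟩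
      · rw [ha', ← hkeq]; exact hρ_ge ta htaI
      · rw [hdaw, hta, max_eq_left hcl2]; linarith
    · have h0 : ta = 0 := by rw [hta]; exact max_eq_right (by linarith)
      refine ⟨0, Nat.zero_le N, ?_, Or.inr ?_⟩
      · rw [ha', h0, hσ0]; simpa using hρ0
      · rw [ha', h0, hσ0]; simp
  -- right anchor
  set tb := min (t₀ + 2*ρ) D with htb
  have htbI : tb ∈ Icc (0:ℝ) D := ⟨le_min (by linarith [ht₀.1]) hD, min_le_right _ _⟩
  have htbt₀ : t₀ ≤ tb := le_min (by linarith) ht₀.2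
  set b' := σ tb with hb'
  have hdbw : dist b' w = tb - t₀ := by
    rw [hb', hw, hσd tb htbI t₀ ht₀, abs_of_nonneg (by linarith)]
  obtain ⟨j₁, hj₁N, hj₁d, hj₁x⟩ :
      ∃ j₁, j₁ ≤ N ∧ dist b' (y j₁) ≤ ρ ∧ (2*ρ ≤ dist b' w ∨ dist b' (y j₁) = 0) := by
    by_cases hcl3 : t₀ + 2*ρ ≤ D
    · obtain ⟨k, hk, hkeq⟩ := hφwit tb
      refine ⟨k, hk, ?_, Or.inl ?_⟩
      · rw [hb', ← hkeq]; exact hρ_ge tb htbI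
      · rw [hdbw, htb, min_eq_left hcl3]; linarith
    · have h0 : tb = D := by rw [htb]; exact min_eq_right (by linarith)
      refine ⟨N, le_refl N, ?_, Or.inr ?_⟩
      · rw [hb', h0, hσN]; simpa using hρ0
      · rw [hb', h0, hσN]; simp
  have hdab : dist a' b' = tb - ta := by
    rw [ha', hb', hσd ta htaI tb htbI, abs_of_nonpos (by linarith)]; ring
  have hdable : dist a' b' ≤ 4*ρ := by
    rw [hdab]
    have h1 := le_max_left (t₀ - 2*ρ) 0
    have h2 := min_le_left (t₀ + 2*ρ) D
    rw [hta, htb]; linarith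
  have hgp0 : gp w a' b' = 0 := by
    unfold gp; rw [hdaw, hdbw, hdab]; ring
  -- connecting geodesics
  obtain ⟨α, ⟨hα0, hαd⟩, hαe⟩ := hgY a' (y i₁)
  set da := dist a' (y i₁) with hda
  obtain ⟨β, ⟨hβ0, hβd⟩, hβe⟩ := hgY (y j₁) b'
  set db := dist (y j₁) b' with hdb
  have hda0 : 0 ≤ da := dist_nonneg
  have hdb0 : 0 ≤ db := dist_nonneg
  have hdaρ : da ≤ ρ := hi₁d
  have hdbρ : db ≤ ρ := by rw [hdb, dist_comm]; exact hj₁d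
  set K := ⌈ρ⌉₊ + 1 with hK
  have hK0 : 0 < K := Nat.succ_pos _
  have hKr : (0:ℝ) < (K:ℝ) := by exact_mod_cast hK0
  have hρK : ρ < (K:ℝ) := by
    have := Nat.le_ceil ρ
    rw [hK]; push_cast; linarith
  have hKρ2 : (K:ℝ) ≤ ρ + 2 := by
    have := Nat.ceil_lt_add_one hρ0
    rw [hK]; push_cast; linarith
  set n2 := max i₁ j₁ - min i₁ j₁ with hn2
  set idx : ℕ → ℕ := fun v => if i₁ ≤ j₁ then i₁ + v else i₁ - v with hidx
  have hidx0 : idx 0 = i₁ := by rw [hidx]; split <;> simp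
  have hidxn2 : idx n2 = j₁ := by rw [hidx]; simp only; split_ifs with h <;> omega
  have hidxN : ∀ v, v ≤ n2 → idx v ≤ N := by
    intro v hv; rw [hidx]; simp only; split_ifs with h <;> omega
  have hidxstep : ∀ v, v + 1 ≤ n2 → dist (y (idx v)) (y (idx (v+1))) ≤ b := by
    intro v hv
    rw [hidx]; simp only
    split_ifs with h
    · rw [show i₁ + (v+1) = (i₁ + v) + 1 by omega]
      exact hstepy (i₁+v)
    · rw [show i₁ - v = (i₁ - (v+1)) + 1 by omega, dist_comm]
      exact hstepy (i₁ - (v+1))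
  set M := K + n2 + K with hM
  set z : ℕ → Z := fun u =>
    if u ≤ K then α (da * u / K)
    else if u ≤ K + n2 then y (idx (u - K))
    else if u ≤ M then β (db * ((u - (K + n2)) : ℕ) / K)
    else b' with hz
  have hαmem : ∀ u : ℕ, u ≤ K → da * u / K ∈ Icc 0 da := by
    intro u hu
    constructor
    · positivity
    · rw [div_le_iff₀ hKr]
      calc da * (u:ℝ) ≤ da * (K:ℝ) :=
        mul_le_mul_of_nonneg_left (by exact_mod_cast hu) hda0
      _ = da * (K:ℝ) := rfl
  have hβmem : ∀ u : ℕ, u ≤ K → db * u / K ∈ Icc 0 db := by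
    intro u hu
    constructor
    · positivity
    · rw [div_le_iff₀ hKr]
      exact mul_le_mul_of_nonneg_left (by exact_mod_cast hu) hdb0
  have hz1 : ∀ u : ℕ, u ≤ K → z u = α (da * u / K) := by
    intro u hu; rw [hz]; simp only [if_pos hu]
  have hcancel : da * (K:ℝ) / K = da := by field_simp
  have hzK : z K = y i₁ := by rw [hz1 K (le_refl K), hcancel, hαe]
  have hz2 : ∀ v, v ≤ n2 → z (K + v) = y (idx v) := by
    intro v hv
    rcases Nat.eq_zero_or_pos v with rfl | hvpos
    · rw [Nat.add_zero, hzK, hidx0]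
    · rw [hz]; simp only
      rw [if_neg (by omega), if_pos (by omega)]
      congr 2; omega
  have hβcancel : db * (K:ℝ) / K = db := by field_simp
  have hzKn2 : z (K + n2) = y j₁ := by rw [hz2 n2 (le_refl n2), hidxn2]
  have hz3 : ∀ v, v ≤ K → z (K + n2 + v) = β (db * v / K) := by
    intro v hv
    rcases Nat.eq_zero_or_pos v with rfl | hvpos
    · rw [Nat.add_zero, hzKn2]
      rw [show db * ((0:ℕ):ℝ) / K = 0 by push_cast; ring]
      exact hβ0.symm
    · rw [hz]; simp only
      rw [if_neg (by omega), if_neg (by omega), if_pos (by omega)]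
      rw [show K + n2 + v - (K + n2) = v by omega]
  have hzM : z M = b' := by
    rw [hM, hz3 K (le_refl K), hβcancel, hβe]
  have hz4 : ∀ u, M < u → z u = b' := by
    intro u hu; rw [hz]; simp only
    rw [if_neg (by omega), if_neg (by omega), if_neg (by omega)]
  have hz0 : z 0 = a' := by
    rw [hz1 0 (Nat.zero_le K)]
    rw [show da * ((0:ℕ):ℝ) / K = 0 by push_cast; ring]
    exact hα0
  -- step bound
  have hstepz : ∀ u : ℕ, dist (z u) (z (u+1)) ≤ b := by
    intro u
    rcases lt_or_ge u K with h1 | h1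
    · rw [hz1 u h1.le, hz1 (u+1) (by omega)]
      rw [hαd _ (hαmem u h1.le) _ (hαmem (u+1) (by omega))]
      have habs : |da * (u:ℝ) / K - da * ((u+1:ℕ):ℝ) / K| = da / K := by
        have h : da * ((u:ℕ):ℝ) / K - da * ((u+1:ℕ):ℝ) / K = -(da/K) := by
          push_cast; ring
        rw [h, abs_neg, abs_of_nonneg (div_nonneg hda0 hKr.le)]
      rw [habs]
      have : da / K ≤ 1 := by rw [div_le_one hKr]; linarith
      linarith
    · rcases lt_or_ge u (K + n2) with h2 | h2
      · obtain ⟨v, rfl⟩ : ∃ v, u = K + v := ⟨u - K, by omega⟩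
        rw [hz2 v (by omega), show K + v + 1 = K + (v+1) by omega, hz2 (v+1) (by omega)]
        exact hidxstep v (by omega)
      · rcases lt_or_ge u M with h3 | h3
        · obtain ⟨v, rfl⟩ : ∃ v, u = K + n2 + v := ⟨u - (K+n2), by omega⟩
          rw [hz3 v (by omega), show K + n2 + v + 1 = K + n2 + (v+1) by omega,
            hz3 (v+1) (by omega)]
          rw [hβd _ (hβmem v (by omega)) _ (hβmem (v+1) (by omega))]
          have habs : |db * (v:ℝ) / K - db * ((v+1:ℕ):ℝ) / K| = db / K := by
            have h : db * ((v:ℕ):ℝ) / K - db * ((v+1:ℕ):ℝ) / K = -(db/K) := by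
              push_cast; ring
            rw [h, abs_neg, abs_of_nonneg (div_nonneg hdb0 hKr.le)]
          rw [habs]
          have : db / K ≤ 1 := by rw [div_le_one hKr]; linarith
          linarith
        · have e1 : z u = b' := by
            rcases eq_or_lt_of_le h3 with h | h
            · rw [← h]; exact hzM
            · exact hz4 u h
          have e2 : z (u+1) = b' := hz4 (u+1) (by omega)
          rw [e1, e2, dist_self]; linarith
  -- distance to w bound
  have hfarz : ∀ u : ℕ, ρ - 1 ≤ dist (z u) w := by
    intro u
    rcases le_or_gt u K with h1 | h1
    · rw [hz1 u h1]
      have hpmem := hαmem u h1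
      set p := da * (u:ℝ) / K with hp
      have hpa : dist a' (α p) = p := by
        rw [← hα0, hαd 0 ⟨le_refl 0, hda0⟩ p hpmem, zero_sub, abs_neg,
          abs_of_nonneg hpmem.1]
      rcases hi₁x with hx | hx
      · have htr := dist_triangle a' (α p) w
        have hple : p ≤ ρ := le_trans hpmem.2 hdaρ
        linarith
      · have hda00 : da = 0 := hx
        have hp0 : p = 0 := by rw [hp, hda00]; ring
        rw [hp0, hα0]
        have ha'y : a' = y i₁ := dist_eq_zero.mp hx
        rw [ha'y, dist_comm]
        exact (hfar i₁ hi₁N).le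
    · rcases le_or_gt u (K + n2) with h2 | h2
      · obtain ⟨v, rfl⟩ : ∃ v, u = K + v := ⟨u - K, by omega⟩
        rw [hz2 v (by omega), dist_comm]
        exact (hfar (idx v) (hidxN v (by omega))).le
      · rcases le_or_gt u M with h3 | h3
        · obtain ⟨v, rfl⟩ : ∃ v, u = K + n2 + v := ⟨u - (K+n2), by omega⟩
          rw [hz3 v (by omega)]
          have hpmem := hβmem v (by omega)
          set p := db * (v:ℝ) / K with hp
          have hpb : dist (β p) b' = db - p := by
            rw [← hβe, hβd p hpmem db ⟨hdb0, le_refl db⟩,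
              abs_of_nonpos (by linarith [hpmem.2])]
            ring
          rcases hj₁x with hx | hx
          · have htr := dist_triangle b' (β p) w
            rw [dist_comm b' (β p), hpb] at htr
            linarith [hpmem.1]
          · have hdb00 : db = 0 := by rw [hdb, dist_comm]; exact hx
            have hp0 : p = 0 := by rw [hp, hdb00]; ring
            rw [hp0, hβ0, dist_comm]
            exact (hfar j₁ hj₁N).le
        · rw [hz4 u h3]
          rcases hj₁x with hx | hx
          · linarith
          · rw [dist_eq_zero.mp hx, dist_comm]
            exact (hfar j₁ hj₁N).le
  -- chain lemma
  have hB : ∀ u : ℕ, (ρ - 1) - b/2 ≤ gp w (z u) (z (u+1)) := fun u =>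
    gp_lower w (z u) (z (u+1)) (ρ-1) b (hfarz u) (hfarz (u+1)) (hstepz u)
  set m := Nat.clog 2 M with hmdef
  have hMle : M ≤ 2^m := Nat.le_pow_clog (by norm_num) M
  have hmain := chainGP δ₁ hY' w z ((ρ-1) - b/2) hB m 0 M hMle
  rw [Nat.zero_add, hz0, hzM, hgp0] at hmain
  have hM2 : 2 ≤ M := by omega
  have hm1 : 0 < m := Nat.clog_pos (by norm_num) hM2
  have h2u : 2 ^ (m - 1) < M := by
    have := Nat.pow_pred_clog_lt_self (show 1 < 2 by norm_num) (show 1 < M by omega)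
    simpa [hmdef] using this
  -- bound n2 and M
  have hn2N : (n2:ℝ) * cl ≤ 6*ρ + c' := by
    have hl := hlow i₁ j₁ hi₁N hj₁N
    have habs : |(i₁:ℝ) - (j₁:ℝ)| = (n2:ℝ) := by
      rw [hn2]
      rcases le_total i₁ j₁ with h | h
      · rw [max_eq_right h, min_eq_left h, Nat.cast_sub h, abs_sub_comm,
          abs_of_nonneg (sub_nonneg.mpr (Nat.cast_le.mpr h))]
      · rw [max_eq_left h, min_eq_right h, Nat.cast_sub h,
          abs_of_nonneg (sub_nonneg.mpr (Nat.cast_le.mpr h))]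
    have htr1 := dist_triangle (y i₁) a' (y j₁)
    have htr2 := dist_triangle a' b' (y j₁)
    rw [dist_comm (y i₁) a'] at htr1
    rw [dist_comm b' (y j₁)] at htr2
    rw [habs] at hl
    linarith [hi₁d, hj₁d, hdable, hl, htr1, htr2]
  have hMr : (M:ℝ) ≤ Aq*ρ + Bq := by
    have hn2r : (n2:ℝ) ≤ (6*ρ + c')/cl := by
      rw [le_div_iff₀ hcl]; exact hn2N
    have hMc : (M:ℝ) = (K:ℝ) + (n2:ℝ) + (K:ℝ) := by rw [hM]; push_cast; ring
    rw [hMc, hAq, hBq]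
    have hdiv : (6*ρ + c')/cl = 6/cl*ρ + c'/cl := by ring
    rw [hdiv] at hn2r
    linarith
  -- numeric endgame
  set u := m - 1 with hu
  have hmu : m = u + 1 := by omega
  have h2R : (2:ℝ)^u < (M:ℝ) := by exact_mod_cast h2u
  have hsq := pow_two_ge_sq u
  have hrholt : ρ ≤ 1 + b/2 + δ₁ * (m:ℝ) := by linarith
  have hmur : (m:ℝ) = (u:ℝ) + 1 := by rw [hmu]; push_cast; ring
  have huineq : ((u:ℝ))^2 ≤ 16*(Pq * (u:ℝ) + Qq) := by
    rw [hmur] at hrholt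
    have c1 : ((u:ℝ))^2/16 ≤ Aq*ρ + Bq := le_trans (hsq.trans h2R.le) hMr
    have c2 : Aq*ρ ≤ Aq*(1 + b/2 + δ₁*((u:ℝ)+1)) :=
      mul_le_mul_of_nonneg_left hrholt hA0.le
    have c3 : Aq*(1 + b/2 + δ₁*((u:ℝ)+1)) = Pq*(u:ℝ) + Aq*(δ₁+1+b/2) := by
      rw [hPq]; ring
    rw [hQq]; linarith
  have hUb : (u:ℝ) ≤ U₀ := by
    by_contra hcon
    push_neg at hcon
    have h1 : (1:ℝ) ≤ (u:ℝ) := le_trans (le_max_left _ _) hcon.le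
    have h2 : 16*(Pq+Qq) < (u:ℝ) := lt_of_le_of_lt (le_max_right _ _) hcon
    have h3 : (0:ℝ) < (u:ℝ) := by linarith
    have h4 : (16*(Pq+Qq))*(u:ℝ) < (u:ℝ)*(u:ℝ) := mul_lt_mul_of_pos_right h2 h3
    have h6 : Qq*1 ≤ Qq*(u:ℝ) := mul_le_mul_of_nonneg_left h1 hQ0.le
    have h7 : ((u:ℝ))^2 = (u:ℝ)*(u:ℝ) := sq (u:ℝ)
    linarith [huineq]
  rw [hmur] at hrholt
  have : δ₁*((u:ℝ)+1) ≤ δ₁*(U₀+1) :=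
    mul_le_mul_of_nonneg_left (by linarith) (by linarith)
  rw [hρ₀]
  linarith

lemma min_lip (a b c : ℝ) : |min a c - min b c| ≤ |a - b| := by
  rw [abs_sub_le_iff]
  constructor
  · rcases le_total b c with h | h
    · rw [min_eq_left h]
      have h1 : min a c ≤ a := min_le_left a c
      have h2 := le_abs_self (a - b); linarith
    · rw [min_eq_right h]
      have h1 : min a c ≤ c := min_le_right a c
      have h2 := abs_nonneg (a - b); linarith
  · rcases le_total a c with h | h
    · rw [min_eq_left h]
      have h1 : min b c ≤ b := min_le_left b c
      have h2 := neg_abs_le (a - b); linarith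
    · rw [min_eq_right h]
      have h1 : min b c ≤ c := min_le_right b c
      have h2 := abs_nonneg (a - b); linarith

lemma clamp_abs (a b L : ℝ) (haL : a ≤ L + 1) (hbL : b ≤ L + 1) :
    |a - b| - 1 ≤ |min a L - min b L| := by
  have key : ∀ x y : ℝ, x ≤ y → y ≤ L + 1 → (y - x) - 1 ≤ min y L - min x L := by
    intro x y hxy hyL
    rcases le_total y L with h2 | h2
    · rw [min_eq_left h2, min_eq_left (le_trans hxy h2)]; linarith
    · rw [min_eq_right h2]
      have h3 : min x L ≤ x := min_le_left x L
      linarith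
  rcases le_total a b with h | h
  · have h1 : min a L ≤ min b L := min_le_min h (le_refl L)
    rw [abs_of_nonpos (by linarith), abs_of_nonpos (by linarith)]
    have := key a b h hbL; linarith
  · have h1 : min b L ≤ min a L := min_le_min h (le_refl L)
    rw [abs_of_nonneg (by linarith), abs_of_nonneg (by linarith)]
    have := key b a h haL; linarith

/-- The chain stays near the geodesic, given the geodesic stays near the chain. -/
lemma chain_near_geodesic (b cl c' ρ₀ : ℝ) (hb : 1 ≤ b) (hcl : 0 < cl)
    (hc'0 : 0 ≤ c') (hρ₀ : 0 ≤ ρ₀) (N : ℕ) (y : ℕ → Z)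
    (hup : ∀ i j : ℕ, dist (y i) (y j) ≤ b * |(i:ℝ) - (j:ℝ)| + b)
    (hlow : ∀ i j : ℕ, i ≤ N → j ≤ N → cl * |(i:ℝ) - (j:ℝ)| - c' ≤ dist (y i) (y j))
    (D : ℝ) (hD : 0 ≤ D) (σ : ℝ → Z) (hσ0 : σ 0 = y 0)
    (hσd : ∀ s ∈ Icc (0:ℝ) D, ∀ t ∈ Icc (0:ℝ) D, dist (σ s) (σ t) = |s - t|)
    (hσN : σ D = y N)
    (hnear : ∀ t ∈ Icc (0:ℝ) D, ∃ k, k ≤ N ∧ dist (σ t) (y k) ≤ ρ₀) :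
    ∀ k, k ≤ N → ∃ t ∈ Icc (0:ℝ) D,
      dist (y k) (σ t) ≤ b * ((2*ρ₀ + 1 + c')/cl) + b + ρ₀ := by
  classical
  set K' := ⌈D⌉₊ + 1 with hK'
  have hK'0 : 0 < K' := Nat.succ_pos _
  have hK'r : (0:ℝ) < (K':ℝ) := by exact_mod_cast hK'0
  have hDK' : D < (K':ℝ) := by
    have := Nat.le_ceil D
    rw [hK']; push_cast; linarith
  have hD1 : D / K' ≤ 1 := by rw [div_le_one hK'r]; linarith
  have hDK0 : 0 ≤ D / K' := div_nonneg hD hK'r.le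
  set τ : ℕ → ℝ := fun m => (m:ℝ) * (D / K') with hτ
  have hτI : ∀ m : ℕ, m ≤ K' → τ m ∈ Icc (0:ℝ) D := by
    intro m hm
    constructor
    · exact mul_nonneg (Nat.cast_nonneg m) hDK0
    · have h1 : (m:ℝ) * (D/K') ≤ (K':ℝ) * (D/K') :=
        mul_le_mul_of_nonneg_right (by exact_mod_cast hm) hDK0
      have h2 : (K':ℝ) * (D/K') = D := by field_simp
      rw [hτ]; simp only; linarith
  have hτ0 : τ 0 = 0 := by rw [hτ]; simp
  have hτK' : τ K' = D := by rw [hτ]; simp only; field_simp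
  have hτstep : ∀ m : ℕ, τ (m+1) - τ m = D / K' := by
    intro m; rw [hτ]; simp only; push_cast; ring
  -- choice of nearby chain indices
  have hch : ∀ m : ℕ, ∃ k, k ≤ N ∧ (m ≤ K' → dist (σ (τ m)) (y k) ≤ ρ₀) ∧
      (m = 0 → k = 0) ∧ (m = K' → k = N) := by
    intro m
    by_cases h0 : m = 0
    · refine ⟨0, Nat.zero_le N, fun _ => ?_, fun _ => rfl, fun hKc => by omega⟩
      subst h0; rw [hτ0, hσ0, dist_self]; exact hρ₀
    · by_cases hKc : m = K'
      · refine ⟨N, le_refl N, fun _ => ?_, fun h => absurd h h0, fun _ => rfl⟩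
        subst hKc; rw [hτK', hσN, dist_self]; exact hρ₀
      · by_cases hm : m ≤ K'
        · obtain ⟨k, hk, hd⟩ := hnear (τ m) (hτI m hm)
          exact ⟨k, hk, fun _ => hd, fun h => absurd h h0, fun h => absurd h hKc⟩
        · exact ⟨0, Nat.zero_le N, fun h => absurd h hm, fun h => absurd h h0,
            fun h => absurd h hKc⟩
  choose I hIN hId hI0 hIK using hch
  have hjump : ∀ m : ℕ, m < K' → (I (m+1) : ℝ) ≤ (I m : ℝ) + (2*ρ₀ + 1 + c')/cl := by
    intro m hm
    have h1 := hId m (by omega)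
    have h2 := hId (m+1) (by omega)
    have h3 : dist (σ (τ m)) (σ (τ (m+1))) = D / K' := by
      rw [hσd _ (hτI m (by omega)) _ (hτI (m+1) (by omega))]
      have := hτstep m
      rw [abs_of_nonpos (by linarith)]; linarith
    have h4 := hlow (I m) (I (m+1)) (hIN m) (hIN (m+1))
    have h5 : dist (y (I m)) (y (I (m+1))) ≤ 2*ρ₀ + 1 := by
      have t1 := dist_triangle (y (I m)) (σ (τ m)) (y (I (m+1)))
      have t2 := dist_triangle (σ (τ m)) (σ (τ (m+1))) (y (I (m+1)))
      rw [dist_comm (y (I m)) (σ (τ m))] at t1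
      linarith
    have h7 : (I (m+1):ℝ) - (I m:ℝ) ≤ |(I m:ℝ) - (I (m+1):ℝ)| := by
      rw [abs_sub_comm]; exact le_abs_self _
    have h8 : |(I m:ℝ) - (I (m+1):ℝ)| * cl ≤ 2*ρ₀ + 1 + c' := by
      have := mul_comm cl (|(I m:ℝ) - (I (m+1):ℝ)|)
      linarith [h4, h5]
    have h9 : |(I m:ℝ) - (I (m+1):ℝ)| ≤ (2*ρ₀ + 1 + c')/cl := by
      rw [le_div_iff₀ hcl]; exact h8
    linarith
  intro k hk
  set P : ℕ → Prop := fun m => I m ≤ k with hP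
  set m₀ := Nat.findGreatest P K' with hm₀
  have hm₀le : m₀ ≤ K' := Nat.findGreatest_le K'
  have hP0 : P 0 := show I 0 ≤ k by rw [hI0 0 rfl]; exact Nat.zero_le k
  have hm₀P : P m₀ := Nat.findGreatest_spec (Nat.zero_le K') hP0
  have hJnn : 0 ≤ (2*ρ₀ + 1 + c')/cl := div_nonneg (by linarith) hcl.le
  by_cases hendc : m₀ = K'
  · have hNk : N ≤ k := by
      have h1 : I m₀ ≤ k := hm₀P
      rw [hendc, hIK K' rfl] at h1
      exact h1
    have hkN : k = N := le_antisymm hk hNk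
    refine ⟨D, ⟨hD, le_refl D⟩, ?_⟩
    rw [hkN, hσN, dist_self]
    have h1 : 0 ≤ b * ((2*ρ₀ + 1 + c')/cl) := mul_nonneg (by linarith) hJnn
    linarith
  · have hm₀lt : m₀ < K' := lt_of_le_of_ne hm₀le hendc
    have hnp : ¬ P (m₀ + 1) :=
      Nat.findGreatest_is_greatest (by rw [← hm₀]; omega) (by omega)
    have hklt : k < I (m₀+1) := by
      by_contra hcc
      push_neg at hcc
      exact hnp hcc
    have hkr : (k:ℝ) - (I m₀:ℝ) ≤ (2*ρ₀ + 1 + c')/cl := by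
      have hj := hjump m₀ hm₀lt
      have c1 : (k:ℝ) + 1 ≤ (I (m₀+1):ℝ) := by exact_mod_cast hklt
      linarith
    have hkr0 : 0 ≤ (k:ℝ) - (I m₀:ℝ) := by
      have : (I m₀:ℝ) ≤ (k:ℝ) := by exact_mod_cast hm₀P
      linarith
    refine ⟨τ m₀, hτI m₀ hm₀le, ?_⟩
    have t1 := dist_triangle (y k) (y (I m₀)) (σ (τ m₀))
    have t2 := hup k (I m₀)
    rw [abs_of_nonneg hkr0] at t2
    have t3 := hId m₀ hm₀le
    rw [dist_comm (σ (τ m₀)) (y (I m₀))] at t3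
    have hbmul : b * ((k:ℝ) - (I m₀:ℝ)) ≤ b * ((2*ρ₀ + 1 + c')/cl) :=
      mul_le_mul_of_nonneg_left hkr (by linarith)
    linarith

end Helper

section RS
variable {X : Type*} [MetricSpace X] {Y : Type*} [MetricSpace Y]

/-- Basepoint change for the radial condition. -/
lemma radial_shift (δ : ℝ) (hδ0 : 0 ≤ δ) (hX : IsDeltaHyperbolic X δ)
    (hgX : IsGeodesicSpace X) (f : X → Y) (l1 μ1 l2 μ2 : ℝ)
    (hl1 : 0 < l1) (hμ1 : 0 < μ1) (hl2 : 0 < l2) (hμ2 : 0 < μ2)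
    (hf : IsLSL f l1 μ1) (c : X) (hrad : IsRadialWith f c l2 μ2) (x₀ : X) :
    ∀ L, 0 ≤ L → ∀ γ : ℝ → X, IsGeodesicOn γ x₀ L → ∀ s ∈ Icc (0:ℝ) L, ∀ t ∈ Icc (0:ℝ) L,
      l2 * dist (γ s) (γ t) -
        (l2*δ + l2 * dist c x₀ + μ2 + l1*(2*dist c x₀ + δ) + μ1) ≤ dist (f (γ s)) (f (γ t)) := by
  set dc := dist c x₀ with hdc
  have hdc0 : 0 ≤ dc := dist_nonneg
  set μ₃ := l2*δ + l2*dc + μ2 + l1*(2*dc + δ) + μ1 with hμ₃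
  suffices key : ∀ L, 0 ≤ L → ∀ γ : ℝ → X, IsGeodesicOn γ x₀ L →
      ∀ s ∈ Icc (0:ℝ) L, ∀ t ∈ Icc (0:ℝ) L, s ≤ t →
      l2 * dist (γ s) (γ t) - μ₃ ≤ dist (f (γ s)) (f (γ t)) by
    intro L hL γ hγ s hs t ht
    rcases le_total s t with h | h
    · exact key L hL γ hγ s hs t ht h
    · have := key L hL γ hγ t ht s hs h
      rw [dist_comm (γ t) (γ s), dist_comm (f (γ t)) (f (γ s))] at this
      exact this
  intro L hL γ hγ s hs t ht hst
  obtain ⟨hγ0, hγd⟩ := hγ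
  set x := γ s with hx
  set y := γ t with hyy
  have h0L : (0:ℝ) ∈ Icc (0:ℝ) L := ⟨le_refl 0, hL⟩
  have dxy : dist x y = t - s := by
    rw [hx, hyy, hγd s hs t ht, abs_of_nonpos (by linarith)]; ring
  have dx0x : dist x₀ x = s := by
    rw [hx, ← hγ0, dist_comm, hγd s hs 0 h0L, sub_zero, abs_of_nonneg hs.1]
  have dx0y : dist x₀ y = t := by
    rw [hyy, ← hγ0, dist_comm, hγd t ht 0 h0L, sub_zero, abs_of_nonneg ht.1]
  have h0 : gp x x₀ y = 0 := by
    unfold gp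
    rw [dx0x, dist_comm y x, dxy, dx0y]
    ring
  have htri := hX x₀ y c x
  rw [h0] at htri
  have hmin : min (gp x x₀ c) (gp x c y) ≤ δ/4 := by linarith [htri]
  -- distance facts in Y, common
  have hfty : dist (f x) (f y) ≥ 0 := dist_nonneg
  rcases min_le_iff.mp hmin with hcase | hcase
  · -- Case B : gp x x₀ c ≤ δ/4
    have hexp : dist x₀ x + dist c x - dist x₀ c ≤ δ/2 := by
      unfold gp at hcase; linarith
    rw [dx0x, show dist x₀ c = dc by rw [hdc, dist_comm]] at hexp
    have hdcx : dist c x ≤ dc + δ/2 := by linarith [hs.1]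
    -- radial from c to y
    obtain ⟨β, hβ, hβe⟩ := hgX c y
    have hDy0 : 0 ≤ dist c y := dist_nonneg
    have hmem0 : (0:ℝ) ∈ Icc (0:ℝ) (dist c y) := ⟨le_refl 0, hDy0⟩
    have hmemD : dist c y ∈ Icc (0:ℝ) (dist c y) := ⟨hDy0, le_refl _⟩
    have hrr := hrad (dist c y) hDy0 β hβ 0 hmem0 (dist c y) hmemD
    rw [hβ.1, hβe] at hrr
    have hdcyge : t - dc ≤ dist c y := by
      have := dist_triangle x₀ c y
      rw [dx0y, show dist x₀ c = dc by rw [hdc, dist_comm]] at this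
      linarith
    have hlsl := hf c x
    have htri2 := dist_triangle (f c) (f x) (f y)
    -- products
    have e1 : l2 * (t - dc) ≤ l2 * dist c y := by
      apply mul_le_mul_of_nonneg_left hdcyge hl2.le
    have e2 : l1 * dist c x ≤ l1 * (dc + δ/2) := by
      apply mul_le_mul_of_nonneg_left hdcx hl1.le
    have e3 : l2 * dist x y = l2 * t - l2 * s := by rw [dxy]; ring
    have e4 : 0 ≤ l2 * s := mul_nonneg hl2.le hs.1
    have e5 : 0 ≤ l1 * dc := mul_nonneg hl1.le hdc0
    have e6 : 0 ≤ l1 * δ := mul_nonneg hl1.le hδ0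
    have e7 : 0 ≤ l2 * δ := mul_nonneg hl2.le hδ0
    rw [hμ₃]
    linarith [hrr, hlsl, htri2]
  · -- Case A : gp x c y ≤ δ/4
    have hexp : dist c x + dist x y - dist c y ≤ δ/2 := by
      unfold gp at hcase
      rw [dist_comm y x] at hcase
      linarith
    by_cases hsm : dist x y ≤ δ/2
    · have h1 : l2 * dist x y ≤ l2 * (δ/2) := mul_le_mul_of_nonneg_left hsm hl2.le
      have e4 : 0 ≤ l2 * dc := mul_nonneg hl2.le hdc0
      have e5 : 0 ≤ l1 * dc := mul_nonneg hl1.le hdc0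
      have e6 : 0 ≤ l1 * δ := mul_nonneg hl1.le hδ0
      have e7 : 0 ≤ l2 * δ := mul_nonneg hl2.le hδ0
      rw [hμ₃]; nlinarith
    · push_neg at hsm
      have hcxley : dist c x ≤ dist c y := by linarith
      obtain ⟨β, hβ, hβe⟩ := hgX c y
      obtain ⟨hβ0, hβd⟩ := hβ
      have hDy0 : 0 ≤ dist c y := dist_nonneg
      have hmemcx : dist c x ∈ Icc (0:ℝ) (dist c y) := ⟨dist_nonneg, hcxley⟩
      have hmemD : dist c y ∈ Icc (0:ℝ) (dist c y) := ⟨hDy0, le_refl _⟩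
      have hmem0 : (0:ℝ) ∈ Icc (0:ℝ) (dist c y) := ⟨le_refl 0, hDy0⟩
      set x' := β (dist c x) with hx'
      have hb1 := hβd (dist c x) hmemcx (dist c y) hmemD
      rw [hβe] at hb1
      have dx'y : dist x' y = dist c y - dist c x := by
        rw [hx', hb1, abs_of_nonpos (by linarith)]; ring
      have hb2 := hβd 0 hmem0 (dist c x) hmemcx
      rw [hβ0] at hb2
      have dcx' : dist c x' = dist c x := by
        rw [hx', hb2, zero_sub, abs_neg, abs_of_nonneg dist_nonneg]
      have hyp4 := hX x x' y c
      have g1 : dist c x - δ/4 ≤ gp c x y := by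
        unfold gp
        rw [dist_comm x c, dist_comm y c]
        linarith
      have g2 : gp c y x' = dist c x := by
        unfold gp
        rw [dist_comm y c, dist_comm x' c, dcx', dist_comm y x', dx'y]
        ring
      have g3 : dist c x - δ/2 ≤ gp c x x' := by
        have hm2 : dist c x - δ/2 ≤ min (gp c x y) (gp c y x') - δ/4 := by
          rw [g2]
          rcases min_cases (gp c x y) (dist c x) with ⟨h, _⟩ | ⟨h, _⟩ <;> rw [h] <;> linarith
        linarith [hyp4]
      have hxx' : dist x x' ≤ δ := by
        unfold gp at g3
        rw [dist_comm x c, dist_comm x' c, dcx'] at g3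
        linarith
      have hrr := hrad (dist c y) hDy0 β ⟨hβ0, hβd⟩ (dist c x) hmemcx (dist c y) hmemD
      rw [hβe] at hrr
      have hd2 : dist (β (dist c x)) y = dist c y - dist c x := by rw [← hx']; exact dx'y
      rw [hd2] at hrr
      have hfx' : f (β (dist c x)) = f x' := by rw [hx']
      rw [hfx'] at hrr
      have hlsl := hf x x'
      have htri2 := dist_triangle (f x') (f x) (f y)
      rw [dist_comm (f x') (f x)] at htri2
      have e1 : l2 * (dist x y - δ/2) ≤ l2 * (dist c y - dist c x) :=
        mul_le_mul_of_nonneg_left (by linarith) hl2.le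
      have e2 : l1 * dist x x' ≤ l1 * δ := mul_le_mul_of_nonneg_left hxx' hl1.le
      have e4 : 0 ≤ l2 * dc := mul_nonneg hl2.le hdc0
      have e5 : 0 ≤ l1 * dc := mul_nonneg hl1.le hdc0
      have e7 : 0 ≤ l2 * δ := mul_nonneg hl2.le hδ0
      rw [hμ₃]
      linarith [hrr, hlsl, htri2]

end RS

/-- stability of pointed rays: for a large scale Lipschitz radial
function `f` between δ-hyperbolic geodesic spaces and any `x₀`, there is `H` so
that the image under `f` of any geodesic from `x₀` is at Hausdorff distance at
most `H` from any geodesic in `Y` joining `f(x₀)` to the image of its endpoint. -/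
theorem stmt7 {X : Type*} [MetricSpace X] {Y : Type*} [MetricSpace Y]
    (δ : ℝ) (hX : IsDeltaHyperbolic X δ) (hY : IsDeltaHyperbolic Y δ)
    (hgX : IsGeodesicSpace X) (hgY : IsGeodesicSpace Y)
    (f : X → Y) (l1 μ1 l2 μ2 : ℝ) (hl1 : 0 < l1) (hμ1 : 0 < μ1)
    (hl2 : 0 < l2) (hμ2 : 0 < μ2)
    (hf : IsLSL f l1 μ1) (c : X) (hrad : IsRadialWith f c l2 μ2) :
    ∀ x₀ : X, ∃ H : ℝ, 0 < H ∧
      ∀ L : ℝ, 0 ≤ L → ∀ γ : ℝ → X, IsGeodesicOn γ x₀ L →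
        ∀ γ' : ℝ → Y, IsGeodesicOn γ' (f x₀) (dist (f x₀) (f (γ L))) →
          γ' (dist (f x₀) (f (γ L))) = f (γ L) →
          Metric.hausdorffDist (f '' (γ '' Icc (0:ℝ) L))
            (γ' '' Icc (0:ℝ) (dist (f x₀) (f (γ L)))) ≤ H := by
  intro x₀
  classical
  -- δ is nonnegative
  have hδ0 : 0 ≤ δ := by
    have h := hX c c c c
    have hg : gp c c c = 0 := by unfold gp; simp
    rw [hg, min_self] at h
    linarith
  -- hyperbolicity of Y with constant δ₁ ≥ 1
  set δ₁ := max (δ/4) 1 with hδ₁def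
  have hδ₁1 : 1 ≤ δ₁ := le_max_right _ _
  have hY' : ∀ x y z w : Y, min (gp w x z) (gp w z y) - δ₁ ≤ gp w x y := by
    intro x y z w
    have h1 := hY x y z w
    have h2 : δ/4 ≤ δ₁ := le_max_left _ _
    linarith
  -- radial condition from basepoint x₀
  have hshift := radial_shift δ hδ0 hX hgX f l1 μ1 l2 μ2 hl1 hμ1 hl2 hμ2 hf c hrad x₀
  set μ₃ := l2*δ + l2 * dist c x₀ + μ2 + l1*(2*dist c x₀ + δ) + μ1 with hμ₃def
  have hμ₃pos : 0 < μ₃ := by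
    have e1 : 0 ≤ l2 * δ := mul_nonneg hl2.le hδ0
    have e2 : 0 ≤ l2 * dist c x₀ := mul_nonneg hl2.le dist_nonneg
    have e3 : 0 ≤ l1 * (2*dist c x₀ + δ) := mul_nonneg hl1.le (by positivity)
    rw [hμ₃def]; linarith
  set b := l1 + μ1 + 1 with hbdef
  have hb1 : 1 ≤ b := by rw [hbdef]; linarith
  set c' := μ₃ + l2 with hc'def
  have hc'0 : 0 < c' := by rw [hc'def]; linarith
  obtain ⟨ρ₀, hρ₀pos, hnearAll⟩ := geodesic_near_chain δ₁ hδ₁1 hY' hgY b l2 c' hb1 hl2 hc'0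
  set J := (2*ρ₀ + 1 + c')/l2 with hJdef
  have hJ0 : 0 ≤ J := by
    rw [hJdef]; apply div_nonneg (by linarith) hl2.le
  set H := b*J + 2*b + ρ₀ with hHdef
  have hbJ : 0 ≤ b*J := mul_nonneg (by linarith) hJ0
  refine ⟨H, by rw [hHdef]; linarith, ?_⟩
  intro L hL γ hγ γ' hγ' hend
  set D := dist (f x₀) (f (γ L)) with hDdef
  have hD0 : 0 ≤ D := dist_nonneg
  obtain ⟨hγ'0, hγ'd⟩ := hγ'
  set N := ⌈L⌉₊ with hNdef
  set y : ℕ → Y := fun k => f (γ (min (k:ℝ) L)) with hydef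
  have hyi : ∀ k : ℕ, y k = f (γ (min (k:ℝ) L)) := fun k => rfl
  have hmem : ∀ k : ℕ, min (k:ℝ) L ∈ Icc (0:ℝ) L :=
    fun k => ⟨le_min (Nat.cast_nonneg k) hL, min_le_right _ _⟩
  have hy0 : y 0 = f x₀ := by
    rw [hyi 0, Nat.cast_zero, min_eq_left hL, hγ.1]
  have hyN : y N = f (γ L) := by
    rw [hyi N, min_eq_right (Nat.le_ceil L)]
  have hup : ∀ i j : ℕ, dist (y i) (y j) ≤ l1 * |(i:ℝ) - (j:ℝ)| + μ1 := by
    intro i j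
    have h1 := hf (γ (min (i:ℝ) L)) (γ (min (j:ℝ) L))
    rw [hγ.2 _ (hmem i) _ (hmem j)] at h1
    have h2 := min_lip (i:ℝ) (j:ℝ) L
    have h3 : l1 * |min (i:ℝ) L - min (j:ℝ) L| ≤ l1 * |(i:ℝ) - (j:ℝ)| :=
      mul_le_mul_of_nonneg_left h2 hl1.le
    rw [hyi i, hyi j]
    linarith
  have hupb : ∀ i j : ℕ, dist (y i) (y j) ≤ b * |(i:ℝ) - (j:ℝ)| + b := by
    intro i j
    have h1 := hup i j
    have h2 : 0 ≤ (μ1 + 1) * |(i:ℝ) - (j:ℝ)| := by positivity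
    rw [hbdef]
    linarith [h1, h2]
  have hstepy : ∀ i : ℕ, dist (y i) (y (i+1)) ≤ b := by
    intro i
    have h1 := hup i (i+1)
    have habs : |(i:ℝ) - ((i+1:ℕ):ℝ)| = 1 := by
      push_cast
      rw [show (i:ℝ) - ((i:ℝ)+1) = -1 by ring, abs_neg, abs_one]
    rw [habs] at h1
    rw [hbdef]; linarith
  have hlow : ∀ i j : ℕ, i ≤ N → j ≤ N → l2 * |(i:ℝ) - (j:ℝ)| - c' ≤ dist (y i) (y j) := by
    intro i j hi hj
    have h1 := hshift L hL γ hγ _ (hmem i) _ (hmem j)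
    rw [hγ.2 _ (hmem i) _ (hmem j)] at h1
    have hNL : (N:ℝ) ≤ L + 1 := by
      have := Nat.ceil_lt_add_one hL
      rw [hNdef]; linarith
    have hiL : (i:ℝ) ≤ L + 1 := le_trans (by exact_mod_cast Nat.cast_le.mpr hi) hNL
    have hjL : (j:ℝ) ≤ L + 1 := le_trans (by exact_mod_cast Nat.cast_le.mpr hj) hNL
    have h2 := clamp_abs (i:ℝ) (j:ℝ) L hiL hjL
    have h3 : l2 * (|(i:ℝ) - (j:ℝ)| - 1) ≤ l2 * |min (i:ℝ) L - min (j:ℝ) L| :=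
      mul_le_mul_of_nonneg_left h2 hl2.le
    rw [hyi i, hyi j, hc'def]
    linarith [h1, h3]
  have hσ0y : γ' 0 = y 0 := by rw [hγ'0, hy0]
  have hσNy : γ' D = y N := by rw [hend, hyN]
  have hnear := hnearAll N y hstepy hlow D hD0 γ' hσ0y hγ'd hσNy
  have hclaim2 := chain_near_geodesic b l2 c' ρ₀ hb1 hl2 hc'0.le hρ₀pos.le N y hupb hlow
    D hD0 γ' hσ0y hγ'd hσNy hnear
  apply Metric.hausdorffDist_le_of_mem_dist
  · rw [hHdef]; linarith
  · rintro x ⟨p, ⟨s, hs, rfl⟩, rfl⟩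
    set k := ⌊s⌋₊ with hkdef
    have hkN : k ≤ N := by
      have h1 : ⌊s⌋₊ ≤ ⌊L⌋₊ := Nat.floor_le_floor hs.2
      have h2 : ⌊L⌋₊ ≤ ⌈L⌉₊ := Nat.floor_le_ceil L
      rw [hkdef, hNdef]; omega
    have hks : (k:ℝ) ≤ s := Nat.floor_le hs.1
    have hks1 : s ≤ (k:ℝ) + 1 := (Nat.lt_floor_add_one s).le
    have hminL : min (k:ℝ) L = (k:ℝ) := min_eq_left (le_trans hks hs.2)
    have hd1 : dist (f (γ s)) (y k) ≤ b := by
      rw [hyi k, hminL]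
      have h1 := hf (γ s) (γ (k:ℝ))
      rw [hγ.2 s hs (k:ℝ) ⟨Nat.cast_nonneg k, le_trans hks hs.2⟩] at h1
      have habs : |s - (k:ℝ)| ≤ 1 := by
        rw [abs_of_nonneg (by linarith)]; linarith
      have h2 : l1 * |s - (k:ℝ)| ≤ l1 * 1 := mul_le_mul_of_nonneg_left habs hl1.le
      rw [hbdef]; linarith
    obtain ⟨t, htI, htd⟩ := hclaim2 k hkN
    refine ⟨γ' t, ⟨t, htI, rfl⟩, ?_⟩
    have h3 := dist_triangle (f (γ s)) (y k) (γ' t)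
    rw [hHdef, hJdef]
    linarith
  · rintro q ⟨t, ht, rfl⟩
    obtain ⟨k, hkN, hkd⟩ := hnear t ht
    refine ⟨f (γ (min (k:ℝ) L)), ⟨γ (min (k:ℝ) L), ⟨min (k:ℝ) L, hmem k, rfl⟩, rfl⟩, ?_⟩
    have heq : f (γ (min (k:ℝ) L)) = y k := (hyi k).symm
    rw [heq, hHdef]
    linarith

end Gromov
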